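/- Let η², η²(M), E, D ≥ 0 and constants C_est, C_drel > 0, θ ∈ (0, 1/(1 + C_est·C_drel)), δ > 0, and set λ = (1 − (1 + C_est·C_drel)θ)/(1 + δ). Suppose η² ≤ R + (1+δ)·η*² + C_est·D, that η*² ≤ λ·η², and D ≤ C_drel·R, where R denotes the estimator restricted to refined elements. Then R ≥ θ·η². -/

import Mathlib

theorem stmt_11 (η2 ηs2 E D R Cest Cdrel θ δ lam : ℝ)
    (hη2 : 0 ≤ η2) (hηs2 : 0 ≤ ηs2) (hE : 0 ≤ E) (hD : 0 ≤ D) (hR : 0 ≤ R)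
    (hCest : 0 < Cest) (hCdrel : 0 < Cdrel)
    (hθ : θ ∈ Set.Ioo 0 (1 / (1 + Cest * Cdrel))) (hδ : 0 < δ)
    (hlam : lam = (1 - (1 + Cest * Cdrel) * θ) / (1 + δ))
    (h1 : η2 ≤ R + (1 + δ) * ηs2 + Cest * D)
    (h2 : ηs2 ≤ lam * η2)
    (h3 : D ≤ Cdrel * R) :
    θ * η2 ≤ R := by
  obtain ⟨hθ0, hθ1⟩ := hθ
  have hcc : (0:ℝ) < 1 + Cest * Cdrel := by positivity
  have hδ1 : (0:ℝ) < 1 + δ := by linarith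
  have hlam' : (1 + δ) * lam = 1 - (1 + Cest * Cdrel) * θ := by
    rw [hlam]; field_simp
  have h2' : (1 + δ) * ηs2 ≤ (1 - (1 + Cest * Cdrel) * θ) * η2 := by
    rw [← hlam']
    nlinarith
  nlinarith [mul_le_mul_of_nonneg_left h3 hCest.le]
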